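/- For any natural number n and reals β₂, β₃ > 0: β₃^{2n} · ₂F₁(-n, -n; 1; β₂²/β₃²) = (1/π) ∫_0^π (β₂² + β₃² - 2 β₂ β₃ cos θ)^n dθ. -/

import Mathlib

open MeasureTheory Real

set_option maxHeartbeats 1000000 in
open Complex in
lemma pointwise_expand (n : ℕ) (β₂ β₃ : ℝ) (θ : ℝ) :
    (β₂ ^ 2 + β₃ ^ 2 - 2 * β₂ * β₃ * Real.cos θ) ^ n =
      ∑ j ∈ Finset.range (n + 1), ∑ k ∈ Finset.range (n + 1),
        ((n.choose j : ℝ) * (n.choose k) * β₂ ^ (j + k) * (-1) ^ (2*n - j - k)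
          * β₃ ^ (2*n - j - k)) * Real.cos (((k : ℝ) - j) * θ) := by
  have hexp : Complex.exp (θ * I) * Complex.exp (-(θ * I)) = 1 := by
    rw [← Complex.exp_add]; simp
  have h1 : ((β₂ ^ 2 + β₃ ^ 2 - 2 * β₂ * β₃ * Real.cos θ : ℝ) : ℂ) =
      ((β₂ : ℂ) - β₃ * Complex.exp (θ * I)) * ((β₂ : ℂ) - β₃ * Complex.exp (-(θ * I))) := by
    push_cast [Complex.ofReal_cos]
    rw [Complex.cos, neg_mul]
    linear_combination (-(β₃:ℂ)^2) * hexp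
  have hc : ((β₂ ^ 2 + β₃ ^ 2 - 2 * β₂ * β₃ * Real.cos θ : ℝ) : ℂ) ^ n =
      ∑ j ∈ Finset.range (n + 1), ∑ k ∈ Finset.range (n + 1),
        (((n.choose j : ℝ) * (n.choose k) * β₂ ^ (j + k) * (-1) ^ (2*n - j - k)
          * β₃ ^ (2*n - j - k) : ℝ) : ℂ) * Complex.exp ((((k : ℝ) - j) * θ : ℝ) * I) := by
    rw [h1, mul_pow]
    have E1 : ((β₂ : ℂ) - β₃ * Complex.exp (θ * I)) ^ n =
        ∑ j ∈ Finset.range (n + 1),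
          (β₂ : ℂ) ^ j * (-1) ^ (n - j) * (β₃:ℂ) ^ (n - j)
            * Complex.exp ((n - j : ℕ) * (θ * I)) * n.choose j := by
      rw [sub_eq_add_neg, add_pow]
      refine Finset.sum_congr rfl fun j hj => ?_
      rw [neg_pow, mul_pow, Complex.exp_nat_mul]; ring
    have E2 : ((β₂ : ℂ) - β₃ * Complex.exp (-(θ * I))) ^ n =
        ∑ k ∈ Finset.range (n + 1),
          (β₂ : ℂ) ^ k * (-1) ^ (n - k) * (β₃:ℂ) ^ (n - k)
            * Complex.exp ((n - k : ℕ) * (-(θ * I))) * n.choose k := by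
      rw [sub_eq_add_neg, add_pow]
      refine Finset.sum_congr rfl fun k hk => ?_
      rw [neg_pow, mul_pow, Complex.exp_nat_mul]; ring
    rw [E1, E2, Finset.sum_mul_sum]
    refine Finset.sum_congr rfl fun j hj => Finset.sum_congr rfl fun k hk => ?_
    rw [Finset.mem_range] at hj hk
    have hj' : j ≤ n := by omega
    have hk' : k ≤ n := by omega
    have hsign : ((-1 : ℂ)) ^ (n - j) * (-1) ^ (n - k) = (-1) ^ (2*n - j - k) := by
      rw [← pow_add]; congr 1; omega
    have hbeta : (β₃:ℂ) ^ (n - j) * (β₃:ℂ) ^ (n - k) = (β₃:ℂ) ^ (2*n - j - k) := by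
      rw [← pow_add]; congr 1; omega
    have hExp : Complex.exp ((n - j : ℕ) * (θ * I)) * Complex.exp ((n - k : ℕ) * (-(θ * I)))
        = Complex.exp (((k : ℂ) - j) * θ * I) := by
      rw [← Complex.exp_add]
      congr 1
      push_cast [Nat.cast_sub hj', Nat.cast_sub hk']
      ring
    push_cast
    linear_combination
      ((n.choose j : ℂ) * (n.choose k) * (β₂:ℂ) ^ j * (β₂:ℂ) ^ k * (β₃:ℂ) ^ (n-j) * (β₃:ℂ) ^ (n-k)
          * Complex.exp ((n - j : ℕ) * (θ * I)) * Complex.exp ((n - k : ℕ) * (-(θ * I)))) * hsign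
        + ((n.choose j : ℂ) * (n.choose k) * (β₂:ℂ) ^ j * (β₂:ℂ) ^ k * (-1:ℂ) ^ (2*n-j-k)
          * Complex.exp ((n - j : ℕ) * (θ * I)) * Complex.exp ((n - k : ℕ) * (-(θ * I)))) * hbeta
        + ((n.choose j : ℂ) * (n.choose k) * (β₂:ℂ) ^ j * (β₂:ℂ) ^ k * (-1:ℂ) ^ (2*n-j-k)
          * (β₃:ℂ) ^ (2*n-j-k)) * hExp
  have h2 := congrArg Complex.re hc
  rw [← Complex.ofReal_pow] at h2
  simpa only [Complex.ofReal_re, Complex.re_sum, Complex.re_ofReal_mul,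
    Complex.exp_ofReal_mul_I_re] using h2

lemma integral_cos_int_mul (m : ℤ) :
    ∫ θ in (0:ℝ)..π, Real.cos ((m:ℝ) * θ) = if m = 0 then π else 0 := by
  rcases eq_or_ne m 0 with h | h
  · simp [h]
  · have hm : (m:ℝ) ≠ 0 := Int.cast_ne_zero.mpr h
    rw [if_neg h, intervalIntegral.integral_comp_mul_left Real.cos hm, mul_zero,
      integral_cos, Real.sin_zero, Real.sin_int_mul_pi, sub_zero, smul_zero]

/-- Terminating hypergeometric `₂F₁(-n,-n;1;x) = Σ_{k=0}^n binom(n,k)² x^k`. -/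
noncomputable def hyp2F1nn (n : ℕ) (x : ℝ) : ℝ :=
  ∑ k ∈ Finset.range (n + 1), ((n.choose k : ℝ)) ^ 2 * x ^ k

set_option maxHeartbeats 1000000 in
theorem hyp2F1nn_integral_rep (n : ℕ) (β₂ β₃ : ℝ) (h₂ : 0 < β₂) (h₃ : 0 < β₃) :
    β₃ ^ (2 * n) * hyp2F1nn n (β₂ ^ 2 / β₃ ^ 2) =
      (1 / π) * ∫ θ in (0 : ℝ)..π,
        (β₂ ^ 2 + β₃ ^ 2 - 2 * β₂ * β₃ * Real.cos θ) ^ n := by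
  have hπ : (π : ℝ) ≠ 0 := Real.pi_ne_zero
  set c : ℕ → ℕ → ℝ := fun j k =>
    (n.choose j : ℝ) * (n.choose k) * β₂ ^ (j + k) * (-1) ^ (2*n - j - k)
      * β₃ ^ (2*n - j - k) with hc
  clear_value c
  have hInt : ∀ j k : ℕ, IntervalIntegrable
      (fun θ : ℝ => c j k * Real.cos (((k : ℝ) - j) * θ)) volume 0 π := by
    intro j k
    exact (Continuous.mul continuous_const (Real.continuous_cos.comp
      (continuous_const.mul continuous_id))).intervalIntegrable 0 π
  have hInt2 : ∀ j : ℕ, IntervalIntegrable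
      (fun θ : ℝ => ∑ k ∈ Finset.range (n + 1), c j k * Real.cos (((k : ℝ) - j) * θ))
      volume 0 π := by
    intro j
    exact (continuous_finset_sum _ fun k _ => Continuous.mul continuous_const
      (Real.continuous_cos.comp (continuous_const.mul continuous_id))).intervalIntegrable 0 π
  have key : (∫ θ in (0:ℝ)..π, (β₂ ^ 2 + β₃ ^ 2 - 2 * β₂ * β₃ * Real.cos θ) ^ n)
      = ∑ j ∈ Finset.range (n + 1), ∑ k ∈ Finset.range (n + 1),
          c j k * ∫ θ in (0:ℝ)..π, Real.cos (((k : ℝ) - j) * θ) := by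
    rw [intervalIntegral.integral_congr
      (g := fun θ => ∑ j ∈ Finset.range (n + 1), ∑ k ∈ Finset.range (n + 1),
        c j k * Real.cos (((k : ℝ) - j) * θ))
      (fun θ _ => by simp only [hc]; exact pointwise_expand n β₂ β₃ θ)]
    rw [intervalIntegral.integral_finset_sum
      (f := fun j θ => ∑ k ∈ Finset.range (n + 1), c j k * Real.cos (((k : ℝ) - j) * θ))
      (fun j _ => hInt2 j)]
    refine Finset.sum_congr rfl fun j _ => ?_
    rw [intervalIntegral.integral_finset_sum (fun k _ => hInt j k)]
    exact Finset.sum_congr rfl fun k _ => intervalIntegral.integral_const_mul _ _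
  have keval : ∀ j k : ℕ, (∫ θ in (0:ℝ)..π, Real.cos (((k : ℝ) - j) * θ))
      = if j = k then π else 0 := by
    intro j k
    have : ((k : ℝ) - j) = (((k : ℤ) - j : ℤ) : ℝ) := by push_cast; ring
    rw [this, integral_cos_int_mul]
    by_cases h : j = k
    · subst h; simp
    · rw [if_neg (show ¬((k:ℤ) - j = 0) by omega), if_neg h]
  rw [key]
  have hdiag : ∀ j ∈ Finset.range (n + 1),
      (∑ k ∈ Finset.range (n + 1),
        c j k * ∫ θ in (0:ℝ)..π, Real.cos (((k : ℝ) - j) * θ)) = c j j * π := by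
    intro j hj
    rw [Finset.sum_eq_single_of_mem j hj]
    · rw [keval j j, if_pos rfl]
    · intro k _ hk
      rw [keval j k, if_neg (fun h => hk h.symm), mul_zero]
  rw [Finset.sum_congr rfl hdiag, ← Finset.sum_mul]
  have hcan : 1 / π * ((∑ i ∈ Finset.range (n + 1), c i i) * π)
      = ∑ i ∈ Finset.range (n + 1), c i i := by
    field_simp
  rw [hcan, hyp2F1nn, Finset.mul_sum]
  refine Finset.sum_congr rfl fun j hj => ?_
  rw [Finset.mem_range] at hj
  have hj' : j ≤ n := by omega
  have h1 : c j j = (n.choose j : ℝ)^2 * β₂ ^ (2*j) * β₃ ^ (2*(n-j)) := by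
    simp only [hc]
    have : (-1:ℝ) ^ (2*n - j - j) = 1 := Even.neg_one_pow ⟨n - j, by omega⟩
    rw [this]
    have e1 : j + j = 2*j := by omega
    have e2 : 2*n - j - j = 2*(n-j) := by omega
    rw [e1, e2]; ring
  rw [h1]
  have hsplit : β₃ ^ (2*n) = β₃ ^ (2*j) * β₃ ^ (2*(n-j)) := by
    rw [← pow_add]; congr 1; omega
  rw [hsplit, div_pow, ← pow_mul, ← pow_mul]
  field_simp
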